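/- Let n > 1 be a squarefree integer, R = ℤ/nℤ, and R^× its group of units. Let D(R^×) denote the least positive integer ℓ such that every multiset over R^× of cardinality ℓ has a nonempty sub-multiset with product 1, and let I(S_R) denote the least positive integer ℓ such that every multiset over R of cardinality ℓ has a nonempty sub-multiset whose product x satisfies x·x = x. Then I(S_R) = D(R^×). -/

import Mathlib

/-- The Davenport constant of the unit group `(ℤ/nℤ)ˣ`. -/
noncomputable def davenportUnits (n : ℕ) : ℕ :=
  sInf {ℓ : ℕ | 0 < ℓ ∧ ∀ T : Multiset (ZMod n)ˣ, T.card = ℓ →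
    ∃ W : Multiset (ZMod n)ˣ, W ≤ T ∧ W ≠ 0 ∧ W.prod = 1}

/-- The `n`-modular Erdős–Burgess constant. -/
noncomputable def modularErdosBurgess (n : ℕ) : ℕ :=
  sInf {ℓ : ℕ | 0 < ℓ ∧ ∀ T : Multiset (ZMod n), T.card = ℓ →
    ∃ W : Multiset (ZMod n), W ≤ T ∧ W ≠ 0 ∧ W.prod * W.prod = W.prod}

/-- A submultiset of a mapped multiset comes from a submultiset. -/
lemma aux_exists_sub_of_le_map {α β : Type*} (f : α → β) (T : Multiset α) :
    ∀ W ≤ T.map f, ∃ W₀ ≤ T, W₀.map f = W := by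
  induction T using Multiset.induction with
  | empty => intro W hW; simp_all
  | cons a T ih =>
    intro W hW
    rw [Multiset.map_cons] at hW
    by_cases h : f a ∈ W
    · obtain ⟨W', rfl⟩ := Multiset.exists_cons_of_mem h
      have hW' : W' ≤ T.map f := (Multiset.cons_le_cons_iff _).mp hW
      obtain ⟨W₀, hle, hmap⟩ := ih W' hW'
      exact ⟨a ::ₘ W₀, Multiset.cons_le_cons _ hle, by simp [hmap]⟩
    · have hW' : W ≤ T.map f := (Multiset.le_cons_of_notMem h).mp hW
      obtain ⟨W₀, hle, hmap⟩ := ih W hW'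
      exact ⟨W₀, le_trans hle (Multiset.le_cons_self _ _), hmap⟩

theorem stmt_5 (n : ℕ) (hn : 1 < n) (hsf : Squarefree n) :
    modularErdosBurgess n = davenportUnits n := by
  -- Set up the CRT isomorphism
  set ι := ↥n.primeFactors with hι
  have hprime : ∀ i : ι, Nat.Prime (i : ℕ) := fun i => Nat.prime_of_mem_primeFactors i.2
  have hcop : Pairwise (Function.onFun Nat.Coprime fun i : ι => (i : ℕ)) := by
    intro i j hij
    exact (Nat.coprime_primes (hprime i) (hprime j)).mpr fun h => hij (Subtype.ext h)
  have hprod : (∏ i : ι, (i : ℕ)) = n := by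
    rw [Finset.prod_coe_sort n.primeFactors (fun p => p)]
    exact Nat.prod_primeFactors_of_squarefree hsf
  have e : ZMod n ≃+* ∀ i : ι, ZMod (i : ℕ) := by
    have := ZMod.prodEquivPi (fun i : ι => (i : ℕ)) hcop
    rwa [hprod] at this
  -- The unit associated to an element: replace zero coordinates by 1
  have mkunit : ∀ a : ZMod n, ∃ v : (ZMod n)ˣ,
      ∀ i : ι, e a i ≠ 0 → e (v : ZMod n) i = e a i := by
    intro a
    refine ⟨⟨e.symm (fun i => if e a i = 0 then 1 else e a i),
             e.symm (fun i => if e a i = 0 then 1 else (e a i)⁻¹), ?_, ?_⟩, ?_⟩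
    · rw [← map_mul, ← map_one e.symm]
      congr 1
      funext i
      haveI : Fact (Nat.Prime (i : ℕ)) := ⟨hprime i⟩
      by_cases h : e a i = 0
      · simp [h]
      · simp [h, mul_inv_cancel₀ h]
    · rw [← map_mul, ← map_one e.symm]
      congr 1
      funext i
      haveI : Fact (Nat.Prime (i : ℕ)) := ⟨hprime i⟩
      by_cases h : e a i = 0
      · simp [h]
      · simp [h, inv_mul_cancel₀ h]
    · intro i hi
      show e (e.symm _) i = _
      rw [RingEquiv.apply_symm_apply]
      simp [hi]
  choose u hu using mkunit
  unfold modularErdosBurgess davenportUnits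
  congr 1
  ext ℓ
  simp only [Set.mem_setOf_eq]
  constructor
  · -- Erdős–Burgess set ⊆ Davenport set
    rintro ⟨hpos, h⟩
    refine ⟨hpos, fun T hT => ?_⟩
    obtain ⟨W, hWle, hW0, hWid⟩ := h (T.map (Units.val)) (by simp [hT])
    obtain ⟨W₀, hle, rfl⟩ := aux_exists_sub_of_le_map _ _ W hWle
    refine ⟨W₀, hle, by simpa using hW0, ?_⟩
    have hcoe : (W₀.map (Units.val)).prod = ((W₀.prod : (ZMod n)ˣ) : ZMod n) :=
      (Multiset.prod_hom W₀ (Units.coeHom (ZMod n)))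
    rw [hcoe] at hWid
    have : W₀.prod * W₀.prod = W₀.prod := Units.ext (by push_cast; exact hWid)
    exact mul_right_cancel (by rw [one_mul]; exact this.symm) |>.symm
  · -- Davenport set ⊆ Erdős–Burgess set
    rintro ⟨hpos, h⟩
    refine ⟨hpos, fun T hT => ?_⟩
    obtain ⟨W', hW'le, hW'0, hW'prod⟩ := h (T.map u) (by simp [hT])
    obtain ⟨W, hle, rfl⟩ := aux_exists_sub_of_le_map u T W' hW'le
    refine ⟨W, hle, by simpa using hW'0, ?_⟩
    -- show idempotency via CRT, coordinatewise
    apply e.injective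
    rw [map_mul]
    funext i
    haveI : Fact (Nat.Prime (i : ℕ)) := ⟨hprime i⟩
    have hev : ∀ x : ZMod n, e x i = (Pi.evalRingHom (fun j : ι => ZMod (j : ℕ)) i)
        ((e : ZMod n →+* ∀ j : ι, ZMod (j : ℕ)) x) := fun x => rfl
    have key : ∀ V : Multiset (ZMod n), e V.prod i = (V.map (fun a => e a i)).prod := by
      intro V
      rw [hev, map_multiset_prod, map_multiset_prod, Multiset.map_map]
      rfl
    show e W.prod i * e W.prod i = e W.prod i
    rw [key]
    set s := W.map (fun a => e a i) with hs
    by_cases hz : (0 : ZMod (i : ℕ)) ∈ s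
    · rw [Multiset.prod_eq_zero hz, mul_zero]
    · -- every coordinate is nonzero, so the product equals the unit product, which is 1
      have hsprod : s.prod = 1 := by
        have hcongr : s = W.map (fun a => e ((u a : (ZMod n)ˣ) : ZMod n) i) := by
          rw [hs]
          apply Multiset.map_congr rfl
          intro a ha
          have hne : e a i ≠ 0 := fun h0 => hz (by
            rw [hs]; exact Multiset.mem_map.mpr ⟨a, ha, h0⟩)
          exact (hu a i hne).symm
        rw [hcongr]
        have : (W.map (fun a => e ((u a : (ZMod n)ˣ) : ZMod n) i)).prod
            = e (((W.map u).prod : (ZMod n)ˣ) : ZMod n) i := by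
          have hc : ((W.map u).prod : ZMod n) = ((W.map u).map (Units.val)).prod :=
            (Multiset.prod_hom (W.map u) (Units.coeHom (ZMod n))).symm
          rw [hc, key, Multiset.map_map, Multiset.map_map]
          rfl
        rw [this, hW'prod]
        simp
      rw [hsprod, mul_one]
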